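/- With D = (α,β)_ℚ a quaternion division algebra, p an odd prime with α, β p-adic units and α a square in ℚ_p: the torus T = {x₁ + x₂e₂ ∈ D : x₁² - αx₂² = 1} is dense in T_p = {x₁ + x₂e₂ ∈ D_p : x₁² - αx₂² = 1}, which under the standard isomorphism D_p ≅ M₂(ℚ_p) is the diagonal torus of SL₂(ℚ_p). -/

import Mathlib

open Quaternion

private lemma torus_id1 {K : Type*} [Field K] (a σ X Y : K) (hσ : σ = 1 ∨ σ = -1)
    (hXY : X^2 - a*Y^2 = 1) (hX : X + σ ≠ 0) :
    1 - a * (σ*Y/(X+σ))^2 = 2*σ/(X+σ) := by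
  rcases hσ with rfl | rfl <;> field_simp
  · linear_combination hXY
  · linear_combination hXY

private lemma torus_id2 {K : Type*} [Field K] (a σ X Y : K) (hσ : σ = 1 ∨ σ = -1)
    (hXY : X^2 - a*Y^2 = 1) (hX : X + σ ≠ 0) (hden : 1 - a * (σ*Y/(X+σ))^2 ≠ 0) :
    σ*(1 + a * (σ*Y/(X+σ))^2)/(1 - a * (σ*Y/(X+σ))^2) = X := by
  rw [div_eq_iff hden]
  rcases hσ with rfl | rfl <;> field_simp
  · linear_combination (-(X+1))*hXY
  · linear_combination (-(X-1))*hXY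

private lemma torus_id3 {K : Type*} [Field K] (a σ X Y : K) (hσ : σ = 1 ∨ σ = -1)
    (hXY : X^2 - a*Y^2 = 1) (hX : X + σ ≠ 0) (hden : 1 - a * (σ*Y/(X+σ))^2 ≠ 0) :
    (2*(σ*Y/(X+σ)))/(1 - a * (σ*Y/(X+σ))^2) = Y := by
  rw [div_eq_iff hden]
  rcases hσ with rfl | rfl <;> field_simp
  · linear_combination (-Y)*hXY
  · linear_combination (-Y)*hXY

/-- Rational points of the torus `x₁² - α x₂² = 1` approximate any `ℚ_p`-point `(X, Y)`
with `X + σ ≠ 0`, via the rational parametrization based at `(σ, 0)`. -/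
private lemma torus_approx (p : ℕ) [Fact p.Prime] (α : ℚ)
    (hns : ∀ t : ℚ, 1 - α * t^2 ≠ 0)
    (σ : ℚ) (hσ : σ = 1 ∨ σ = -1)
    (X Y : ℚ_[p]) (hXY : X^2 - (α:ℚ_[p]) * Y^2 = 1) (hX : X + (σ:ℚ_[p]) ≠ 0)
    {ε : ℝ} (hε : 0 < ε) :
    ∃ x₁ x₂ : ℚ, x₁^2 - α * x₂^2 = 1 ∧ ‖(x₁:ℚ_[p]) - X‖ < ε ∧ ‖(x₂:ℚ_[p]) - Y‖ < ε := by
  set a : ℚ_[p] := (α:ℚ_[p]) with ha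
  set s : ℚ_[p] := (σ:ℚ_[p]) with hs
  have hσs : s = 1 ∨ s = -1 := by rcases hσ with h | h <;> [left; right] <;> rw [hs, h] <;> push_cast <;> ring
  have hs0 : s ≠ 0 := by rcases hσs with h | h <;> rw [h] <;> norm_num
  set T : ℚ_[p] := s*Y/(X+s) with hT
  have hden : 1 - a*T^2 = 2*s/(X+s) := torus_id1 a s X Y hσs hXY hX
  have hden0 : 1 - a*T^2 ≠ 0 := by
    rw [hden]; exact div_ne_zero (mul_ne_zero two_ne_zero hs0) hX
  set F : ℚ_[p] → ℚ_[p] := fun u => s*(1+a*u^2)/(1-a*u^2) with hF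
  set G : ℚ_[p] → ℚ_[p] := fun u => (2*u)/(1-a*u^2) with hG
  have hFT : F T = X := torus_id2 a s X Y hσs hXY hX hden0
  have hGT : G T = Y := torus_id3 a s X Y hσs hXY hX hden0
  have hFc : ContinuousAt F T := ContinuousAt.div (by fun_prop) (by fun_prop) hden0
  have hGc : ContinuousAt G T := ContinuousAt.div (by fun_prop) (by fun_prop) hden0
  obtain ⟨δ₁, hδ₁pos, hδ₁⟩ := Metric.continuousAt_iff.mp hFc ε hε
  obtain ⟨δ₂, hδ₂pos, hδ₂⟩ := Metric.continuousAt_iff.mp hGc ε hε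
  obtain ⟨t, ht⟩ := Padic.rat_dense p T (lt_min hδ₁pos hδ₂pos)
  have hdist : dist (t:ℚ_[p]) T < min δ₁ δ₂ := by
    rw [dist_eq_norm, norm_sub_rev]; exact ht
  have hden0t : (1:ℚ_[p]) - a*(t:ℚ_[p])^2 ≠ 0 := by
    intro h
    apply hns t
    rw [ha] at h
    have : ((1 - α * t^2 : ℚ) : ℚ_[p]) = 0 := by push_cast; exact_mod_cast h
    exact_mod_cast this
  refine ⟨σ*(1+α*t^2)/(1-α*t^2), 2*t/(1-α*t^2), ?_, ?_, ?_⟩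
  · rcases hσ with rfl | rfl <;> (field_simp [hns t]; try ring)
  · have h1 : ((σ*(1+α*t^2)/(1-α*t^2) : ℚ) : ℚ_[p]) = F (t:ℚ_[p]) := by
      rw [hF]; push_cast; ring
    rw [h1, ← hFT, ← dist_eq_norm]
    exact hδ₁ (lt_of_lt_of_le hdist (min_le_left _ _))
  · have h2 : ((2*t/(1-α*t^2) : ℚ) : ℚ_[p]) = G (t:ℚ_[p]) := by
      rw [hG]; push_cast; ring
    rw [h2, ← hGT, ← dist_eq_norm]
    exact hδ₂ (lt_of_lt_of_le hdist (min_le_right _ _))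

/-- The `p`-adic topology on `D_p`, viewed as a 4-dimensional `ℚ_p`-vector space. -/
noncomputable instance quatTopology (p : ℕ) [Fact p.Prime] (c₁ c₂ : ℚ_[p]) :
    TopologicalSpace ℍ[ℚ_[p], c₁, c₂] :=
  TopologicalSpace.induced (QuaternionAlgebra.equivTuple c₁ 0 c₂) inferInstance

/-- The torus `T = {x₁ + x₂ e₂ ∈ D : x₁² - α x₂² = 1}` is dense in the corresponding
torus `T_p ⊆ D_p` (which is the diagonal torus of `SL₂(ℚ_p)` under the standard
isomorphism), for `D = (α,β)_ℚ` a division algebra, `p` an odd prime with `α, β`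
`p`-adic units and `α` a square in `ℚ_p`. -/
theorem torus_dense (p : ℕ) [Fact p.Prime] (hp : p ≠ 2)
    (α β : ℚ) (hα : ‖(α : ℚ_[p])‖ = 1) (hβ : ‖(β : ℚ_[p])‖ = 1)
    (hsq : ∃ s : ℚ_[p], s ^ 2 = (α : ℚ_[p]))
    (hdiv : ∀ x : ℍ[ℚ, α, β], x ≠ 0 → IsUnit x)
    (ι : ℍ[ℚ, α, β] → ℍ[ℚ_[p], (α : ℚ_[p]), (β : ℚ_[p])])
    (hι : ∀ x, ι x = ⟨(x.re : ℚ_[p]), (x.imI : ℚ_[p]), (x.imJ : ℚ_[p]), (x.imK : ℚ_[p])⟩)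
    (y : ℍ[ℚ_[p], (α : ℚ_[p]), (β : ℚ_[p])])
    (hyT : y.imJ = 0 ∧ y.imK = 0 ∧ y.re ^ 2 - (α : ℚ_[p]) * y.imI ^ 2 = 1) :
    y ∈ closure (ι '' {x : ℍ[ℚ, α, β] |
        x.imJ = 0 ∧ x.imK = 0 ∧ x.re ^ 2 - α * x.imI ^ 2 = 1}) := by
  obtain ⟨hJ, hK, hXY⟩ := hyT
  -- α is not a square in ℚ, since D is a division algebra
  have hns : ∀ t : ℚ, 1 - α * t^2 ≠ 0 := by
    intro t h
    have ht0 : t ≠ 0 := by rintro rfl; simp at h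
    have hx : (⟨1, t, 0, 0⟩ : ℍ[ℚ, α, β]) ≠ 0 := by
      intro hh
      exact one_ne_zero (congrArg QuaternionAlgebra.re hh)
    have hmul : (⟨1, t, 0, 0⟩ : ℍ[ℚ, α, β]) * ⟨1, -t, 0, 0⟩ = 0 := by
      ext <;> simp <;> linear_combination h
    have := ((hdiv _ hx).mul_right_eq_zero).mp hmul
    exact ht0 (by simpa using neg_eq_zero.mp (congrArg QuaternionAlgebra.imI this))
  -- choose the base point (σ, 0) of the parametrization
  obtain ⟨σ, hσor, hX⟩ : ∃ σ : ℚ, (σ = 1 ∨ σ = -1) ∧ y.re + (σ:ℚ_[p]) ≠ 0 := by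
    by_cases hc : y.re + 1 = 0
    · refine ⟨-1, Or.inr rfl, ?_⟩
      have hre : y.re = -1 := eq_neg_of_add_eq_zero_left hc
      rw [hre]; push_cast; norm_num
    · exact ⟨1, Or.inl rfl, by push_cast; exact hc⟩
  have hind : Topology.IsInducing
      (⇑(QuaternionAlgebra.equivTuple ((α:ℚ_[p])) 0 ((β:ℚ_[p]))) :
        ℍ[ℚ_[p], (α : ℚ_[p]), (β : ℚ_[p])] → (Fin 4 → ℚ_[p])) := ⟨rfl⟩
  rw [hind.closure_eq_preimage_closure_image, Set.mem_preimage, Metric.mem_closure_iff]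
  intro ε hε
  obtain ⟨x₁, x₂, hid, h1, h2⟩ := torus_approx p α hns σ hσor y.re y.imI hXY hX hε
  refine ⟨_, ⟨ι ⟨x₁, x₂, 0, 0⟩, ⟨⟨x₁, x₂, 0, 0⟩, ⟨rfl, rfl, hid⟩, rfl⟩, rfl⟩, ?_⟩
  rw [dist_pi_lt_iff hε]
  intro i
  fin_cases i <;>
    simp [hι, QuaternionAlgebra.equivTuple_apply, dist_eq_norm, hJ, hK, hε]
  · rw [norm_sub_rev]; exact h1
  · rw [norm_sub_rev]; exact h2
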